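/- arXiv:1404.6600 — 3 statements merged into one kernel-verified Lean document; each statement's English description precedes it below -/
import Mathlib

section
/- Let P(z) = a_0 + Σ_{j=μ}^{n} a_j z^j, 1 ≤ μ ≤ n, be a polynomial of degree n having no zero in |z| ≤ k, where k ≥ 1, and set m = min_{|z|=k} |P(z)|. Then s_0 ≥ k^μ, where s_0 = k^{μ+1} · ( (μ/n)·(|a_μ|/(|a_0| − m))·k^{μ−1} + 1 ) / ( (μ/n)·(|a_μ|/(|a_0| − m))·k^{μ+1} + 1 ). -/
open Polynomial Metric

lemma reflect_one_X_add_C (a : ℂ) : reflect 1 (X + C a) = 1 + C a * X := by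
  have h1 : (X : ℂ[X]) = X ^ 1 := (pow_one _).symm
  rw [Polynomial.reflect_add, h1, Polynomial.reflect_monomial]
  have h2 : (C a : ℂ[X]) = C a * X ^ 0 := by ring
  rw [h2, Polynomial.reflect_C_mul_X_pow]
  simp

lemma natDegree_prod_X_add_C_le (s : Multiset ℂ) :
    ((s.map (fun a => X + C a)).prod).natDegree ≤ Multiset.card s := by
  refine (Polynomial.natDegree_multiset_prod_le _).trans ?_
  rw [Multiset.map_map]
  refine le_trans (Multiset.sum_le_card_nsmul _ 1 ?_) (by simp)
  intro x hx
  simp only [Multiset.mem_map] at hx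
  obtain ⟨a, _, rfl⟩ := hx
  simp [Polynomial.natDegree_X_add_C]

/-- reflect of a product of `X + C a` is the product of `1 + C a * X`. -/
lemma reflect_prod_X_add_C (s : Multiset ℂ) :
    reflect (Multiset.card s) ((s.map (fun a => X + C a)).prod)
      = (s.map (fun a => 1 + C a * X)).prod := by
  induction s using Multiset.induction with
  | empty => simp
  | cons a s ih =>
    rw [Multiset.card_cons, Multiset.map_cons, Multiset.prod_cons, add_comm (Multiset.card s) 1,
      Polynomial.reflect_mul _ _ (by simp [Polynomial.natDegree_X_add_C])
        (natDegree_prod_X_add_C_le s), ih, Multiset.map_cons, Multiset.prod_cons,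
      reflect_one_X_add_C]

/-- Coefficients of `∏ (1 + C a * X)` are elementary symmetric functions. -/
lemma coeff_prod_one_add_C_mul_X (s : Multiset ℂ) {r : ℕ} (hr : r ≤ Multiset.card s) :
    ((s.map (fun a => 1 + C a * X)).prod).coeff r = s.esymm r := by
  rw [← reflect_prod_X_add_C, Polynomial.coeff_reflect, Polynomial.revAt_le hr,
    Multiset.prod_X_add_C_coeff s (Nat.sub_le _ _)]
  congr 1
  omega

lemma factor_eq (z : ℂ) (hz : z ≠ 0) :
    (X - C z : ℂ[X]) = C (-z) * (1 + C (-z⁻¹) * X) := by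
  have : (-z) * (-z⁻¹) = 1 := by field_simp
  rw [mul_add, mul_one, ← mul_assoc, ← C_mul, this, map_neg, sub_eq_add_neg, map_one, one_mul]
  ring

/-- The key coefficient formula: `Q.coeff r = Q.coeff 0 * esymm r` of negated inverse roots. -/
lemma coeff_eq_coeff_zero_mul_esymm (Q : ℂ[X]) (hQ0 : Q ≠ 0)
    (hroots : ∀ z ∈ Q.roots, z ≠ 0) {r : ℕ} (hr : r ≤ Q.natDegree) :
    Q.coeff r = Q.coeff 0 * (Q.roots.map (fun z => -z⁻¹)).esymm r := by
  have hcard : Q.roots.card = Q.natDegree :=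
    Polynomial.splits_iff_card_roots.mp (IsAlgClosed.splits Q)
  have hfac : C Q.leadingCoeff * (Q.roots.map fun a => X - C a).prod = Q :=
    Polynomial.C_leadingCoeff_mul_prod_multiset_X_sub_C hcard
  set M : Multiset ℂ := Q.roots.map (fun z => -z⁻¹) with hM
  set V : ℂ[X] := (M.map (fun a => 1 + C a * X)).prod with hV
  have hprod : (Q.roots.map fun a => X - C a).prod
      = C ((Q.roots.map (fun z => -z)).prod) * V := by
    have : (Q.roots.map fun a => X - C a)
        = Q.roots.map (fun z => C (-z) * (1 + C (-z⁻¹) * X)) := by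
      apply Multiset.map_congr rfl
      intro z hz
      exact factor_eq z (hroots z hz)
    rw [this, Multiset.prod_map_mul, hV, hM, Multiset.map_map]
    congr 1
    · rw [show (fun z : ℂ => (C (-z) : ℂ[X])) = (fun w : ℂ => (C w : ℂ[X])) ∘ (fun z : ℂ => -z)
        from rfl, ← Multiset.map_map]
      exact Multiset.prod_hom _ Polynomial.C.toMonoidHom
  have hQ : Q = C (Q.leadingCoeff * (Q.roots.map (fun z => -z)).prod) * V := by
    rw [C_mul, mul_assoc, ← hprod, hfac]
  have hV0 : V.coeff 0 = 1 := by
    rw [Polynomial.coeff_zero_eq_eval_zero, hV, Polynomial.eval_multiset_prod,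
      Multiset.map_map]
    have : ∀ x ∈ M.map (fun a ↦ eval 0 (1 + C a * X)), x = 1 := by
      intro x hx
      simp only [Multiset.mem_map] at hx
      obtain ⟨a, _, rfl⟩ := hx
      simp
    exact Multiset.prod_eq_one this
  have hc0 : Q.coeff 0 = Q.leadingCoeff * (Q.roots.map (fun z => -z)).prod := by
    conv_lhs => rw [hQ]
    rw [Polynomial.coeff_C_mul, hV0, mul_one]
  have hcardM : Multiset.card M = Q.natDegree := by
    rw [hM, Multiset.card_map, hcard]
  conv_lhs => rw [hQ]
  rw [Polynomial.coeff_C_mul, ← hc0, coeff_prod_one_add_C_mul_X M (by rw [hcardM]; exact hr)]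

lemma multiset_enum (M : Multiset ℂ) : ∃ f : Fin (Multiset.card M) → ℂ,
    Multiset.map f Finset.univ.val = M := by
  have hl : M.toList.length = Multiset.card M := Multiset.length_toList M
  refine ⟨fun i => M.toList.get (Fin.cast hl.symm i), ?_⟩
  have h1 : (Finset.univ.val : Multiset (Fin (Multiset.card M)))
      = ↑(List.finRange (Multiset.card M)) := rfl
  rw [h1, Multiset.map_coe, ← List.ofFn_eq_map]
  have : List.ofFn (fun i => M.toList.get (Fin.cast hl.symm i)) = M.toList := by
    apply List.ext_get
    · simp
    · intro i h1' h2'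
      simp
  rw [this, Multiset.coe_toList]

/-- Newton's identity consequence: if the first `μ - 1` elementary symmetric functions vanish,
then `μ * esymm μ` is (up to sign) the power sum, which is bounded. -/
lemma esymm_bound (M : Multiset ℂ) {μ : ℕ} (hμ : 0 < μ) (B : ℝ)
    (hB : ∀ z ∈ M, ‖z‖ ≤ B)
    (he : ∀ j, 1 ≤ j → j < μ → M.esymm j = 0) :
    (μ : ℝ) * ‖M.esymm μ‖ ≤ (Multiset.card M : ℝ) * B ^ μ := by
  obtain ⟨f, hf⟩ := multiset_enum M
  have key := MvPolynomial.psum_eq_mul_esymm_sub_sum (Fin (Multiset.card M)) ℂ μ hμ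
  have key2 := congrArg (MvPolynomial.aeval f) key
  have hps : ∀ j : ℕ, MvPolynomial.aeval f (MvPolynomial.psum (Fin (Multiset.card M)) ℂ j)
      = ∑ i, f i ^ j := by
    intro j
    simp [MvPolynomial.psum, map_sum, map_pow]
  have hes : ∀ j : ℕ, MvPolynomial.aeval f (MvPolynomial.esymm (Fin (Multiset.card M)) ℂ j)
      = M.esymm j := by
    intro j
    rw [MvPolynomial.aeval_esymm_eq_multiset_esymm, hf]
  rw [map_sub, map_mul, map_mul, map_sum, hps, hes] at key2
  simp only [map_pow, map_neg, map_one, map_natCast] at key2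
  have hzero : ∀ a ∈ Finset.filter (fun a => a.1 ∈ Set.Ioo 0 μ) (Finset.HasAntidiagonal.antidiagonal μ),
      MvPolynomial.aeval f ((-1) ^ a.1 * MvPolynomial.esymm (Fin (Multiset.card M)) ℂ a.1
        * MvPolynomial.psum (Fin (Multiset.card M)) ℂ a.2) = 0 := by
    intro a ha
    simp only [Finset.mem_filter, Set.mem_Ioo] at ha
    rw [map_mul, map_mul, hes]
    rw [he a.1 ha.2.1 ha.2.2]
    ring
  rw [Finset.sum_congr rfl hzero, Finset.sum_const_zero, sub_zero] at key2
  have habs : ‖∑ i, f i ^ μ‖ ≤ (Multiset.card M : ℝ) * B ^ μ := by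
    refine (norm_sum_le _ _).trans ?_
    have : ∀ i ∈ (Finset.univ : Finset (Fin (Multiset.card M))), ‖f i ^ μ‖ ≤ B ^ μ := by
      intro i _
      rw [norm_pow]
      refine pow_le_pow_left₀ (norm_nonneg _) ?_ μ
      have hmem : f i ∈ Multiset.map f Finset.univ.val :=
        Multiset.mem_map_of_mem f (Finset.mem_univ_val i)
      rw [hf] at hmem
      exact hB (f i) hmem
    refine (Finset.sum_le_sum this).trans ?_
    rw [Finset.sum_const, Finset.card_univ, Fintype.card_fin, nsmul_eq_mul]
  calc (μ : ℝ) * ‖M.esymm μ‖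
      = ‖(-1) ^ (μ + 1) * (μ : ℂ) * M.esymm μ‖ := by
        rw [norm_mul, norm_mul, norm_pow]
        simp [Complex.norm_natCast]
    _ = ‖∑ i, f i ^ μ‖ := by rw [key2]
    _ ≤ _ := habs

/-- Qazi's inequality: `μ |a_μ| k^μ ≤ n |a₀|` for a polynomial with no zeros in `|z| ≤ k`. -/
lemma qazi (Q : ℂ[X]) (n μ : ℕ) (k : ℝ) (hμ1 : 1 ≤ μ) (hμn : μ ≤ n)
    (hdeg : Q.natDegree = n) (hc : ∀ j, 1 ≤ j → j < μ → Q.coeff j = 0) (hk : 1 ≤ k)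
    (hz : ∀ z : ℂ, ‖z‖ ≤ k → Q.eval z ≠ 0) :
    (μ : ℝ) * ‖Q.coeff μ‖ * k ^ μ ≤ (n : ℝ) * ‖Q.coeff 0‖ := by
  have hk0 : (0 : ℝ) < k := lt_of_lt_of_le one_pos hk
  have ha₀ : Q.coeff 0 ≠ 0 := by
    rw [Polynomial.coeff_zero_eq_eval_zero]
    exact hz 0 (by simpa using hk0.le)
  have hQ0 : Q ≠ 0 := fun h => ha₀ (by simp [h])
  have hroots : ∀ z ∈ Q.roots, k < ‖z‖ := by
    intro z hzr
    by_contra hle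
    push_neg at hle
    exact hz z hle ((Polynomial.mem_roots hQ0).mp hzr)
  have hroots0 : ∀ z ∈ Q.roots, z ≠ 0 := by
    intro z hzr h0
    have := hroots z hzr
    rw [h0] at this
    simp at this
    linarith
  set M : Multiset ℂ := Q.roots.map (fun z => -z⁻¹) with hM
  have hcard : Multiset.card M = n := by
    rw [hM, Multiset.card_map,
      Polynomial.splits_iff_card_roots.mp (IsAlgClosed.splits Q), hdeg]
  have hesymm : ∀ j : ℕ, j ≤ n → M.esymm j = Q.coeff j / Q.coeff 0 := by
    intro j hj
    rw [eq_div_iff ha₀, mul_comm]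
    exact (coeff_eq_coeff_zero_mul_esymm Q hQ0 hroots0 (hdeg ▸ hj)).symm
  have hB : ∀ z ∈ M, ‖z‖ ≤ k⁻¹ := by
    intro z hzm
    rw [hM] at hzm
    simp only [Multiset.mem_map] at hzm
    obtain ⟨w, hw, rfl⟩ := hzm
    rw [norm_neg, norm_inv]
    exact inv_anti₀ hk0 (hroots w hw).le
  have he : ∀ j, 1 ≤ j → j < μ → M.esymm j = 0 := by
    intro j h1 h2
    rw [hesymm j (le_trans h2.le hμn), hc j h1 h2, zero_div]
  have hbound := esymm_bound M (by omega) k⁻¹ hB he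
  rw [hcard, hesymm μ hμn, norm_div] at hbound
  have ha₀pos : 0 < ‖Q.coeff 0‖ := by
    simpa using ha₀
  have hkpow : (0 : ℝ) < k ^ μ := pow_pos hk0 μ
  have h1 : (μ : ℝ) * ‖Q.coeff μ‖ * k ^ μ
      = ((μ : ℝ) * (‖Q.coeff μ‖ / ‖Q.coeff 0‖))
        * (‖Q.coeff 0‖ * k ^ μ) := by
    field_simp
  have h2 : (n : ℝ) * ‖Q.coeff 0‖
      = ((n : ℝ) * k⁻¹ ^ μ) * (‖Q.coeff 0‖ * k ^ μ) := by
    rw [inv_pow]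
    field_simp
  rw [h1, h2]
  exact mul_le_mul_of_nonneg_right hbound (by positivity)

lemma min_modulus (P : ℂ[X]) (k m : ℝ) (hk0 : 0 < k)
    (hz : ∀ z : ℂ, ‖z‖ ≤ k → P.eval z ≠ 0)
    (hm : m = sInf ((fun z => ‖P.eval z‖) '' sphere (0 : ℂ) k)) :
    0 < m ∧ ∀ z : ℂ, ‖z‖ ≤ k → m ≤ ‖P.eval z‖ := by
  set f : ℂ → ℝ := fun z => ‖P.eval z‖ with hf
  have hcont : ContinuousOn f (sphere (0 : ℂ) k) :=
    (continuous_norm.comp (P.continuous_aeval)).continuousOn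
  have hne : (sphere (0 : ℂ) k).Nonempty := by
    refine ⟨(k : ℂ), ?_⟩
    simp [Complex.norm_real, abs_of_pos hk0]
  obtain ⟨z₀, hz₀mem, hz₀min⟩ := (isCompact_sphere (0 : ℂ) k).exists_isMinOn hne hcont
  have hz₀k : ‖z₀‖ = k := by
    simpa using mem_sphere_zero_iff_norm.mp hz₀mem
  have hmin : IsLeast (f '' sphere (0 : ℂ) k) (f z₀) := by
    constructor
    · exact ⟨z₀, hz₀mem, rfl⟩
    · rintro y ⟨w, hw, rfl⟩
      exact hz₀min hw
  have hmeq : m = f z₀ := by rw [hm, hmin.csInf_eq]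
  have hmpos : 0 < m := by
    rw [hmeq, hf]
    exact norm_pos_iff.mpr (hz z₀ hz₀k.le)
  have hsphere : ∀ z ∈ sphere (0 : ℂ) k, m ≤ f z := by
    intro z hzs
    rw [hmeq]
    exact hz₀min hzs
  refine ⟨hmpos, fun z hzk => ?_⟩
  have hcl : closure (ball (0 : ℂ) k) = closedBall 0 k := closure_ball 0 hk0.ne'
  have hdiff : DiffContOnCl ℂ (fun w => (P.eval w)⁻¹) (ball (0 : ℂ) k) := by
    apply DifferentiableOn.diffContOnCl
    rw [hcl]
    apply DifferentiableOn.inv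
    · exact (P.differentiable).differentiableOn
    · intro x hx
      exact hz x (by simpa using mem_closedBall_zero_iff.mp hx)
  have hfr : ∀ w ∈ frontier (ball (0 : ℂ) k), ‖(P.eval w)⁻¹‖ ≤ m⁻¹ := by
    intro w hw
    rw [frontier_ball 0 hk0.ne'] at hw
    rw [norm_inv]
    exact inv_anti₀ hmpos (hsphere w hw)
  have hzc : z ∈ closure (ball (0 : ℂ) k) := by
    rw [hcl]
    exact mem_closedBall_zero_iff.mpr (by simpa using hzk)
  have hb := Complex.norm_le_of_forall_mem_frontier_norm_le isBounded_ball hdiff hfr hzc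
  rw [norm_inv] at hb
  have hfpos : 0 < ‖P.eval z‖ := norm_pos_iff.mpr (hz z hzk)
  have h2 := mul_le_mul_of_nonneg_left hb (le_of_lt (mul_pos hmpos hfpos))
  rw [mul_assoc, mul_inv_cancel₀ hfpos.ne', mul_one, mul_comm m (‖P.eval z‖),
    mul_assoc, mul_inv_cancel₀ hmpos.ne', mul_one] at h2
  exact h2

lemma key_ineq (n μ : ℕ) (P : Polynomial ℂ) (k : ℝ)
    (hμ1 : 1 ≤ μ) (hμn : μ ≤ n)
    (hdeg : P.natDegree = n)
    (hcoeff : ∀ j, 1 ≤ j → j < μ → P.coeff j = 0)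
    (hk : 1 ≤ k)
    (hzeros : ∀ z : ℂ, ‖z‖ ≤ k → P.eval z ≠ 0)
    (m : ℝ)
    (hm : m = sInf ((fun z => ‖P.eval z‖) '' sphere (0 : ℂ) k)) :
    (μ : ℝ) * ‖P.coeff μ‖ * k ^ μ
      ≤ (n : ℝ) * (‖P.coeff 0‖ - m) := by
  have hk0 : (0 : ℝ) < k := lt_of_lt_of_le one_pos hk
  obtain ⟨hmpos, hmle⟩ := min_modulus P k m hk0 hzeros hm
  have ha₀ : P.coeff 0 ≠ 0 := by
    rw [Polynomial.coeff_zero_eq_eval_zero]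
    exact hzeros 0 (by simpa using hk0.le)
  have ha₀pos : 0 < ‖P.coeff 0‖ := norm_pos_iff.mpr ha₀
  have hma₀ : m ≤ ‖P.coeff 0‖ := by
    rw [Polynomial.coeff_zero_eq_eval_zero]
    exact hmle 0 (by simpa using hk0.le)
  -- for every t ∈ [0,1), the inequality with t*m holds
  have hstep : ∀ t : ℝ, t ∈ Set.Ico (0 : ℝ) 1 →
      (μ : ℝ) * ‖P.coeff μ‖ * k ^ μ
        ≤ (n : ℝ) * (‖P.coeff 0‖ - t * m) := by
    intro t ht
    obtain ⟨ht0, ht1⟩ := ht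
    set c : ℝ := t * m with hc
    have hc0 : 0 ≤ c := mul_nonneg ht0 hmpos.le
    have hcm : c < m := by
      rw [hc]
      nlinarith
    have hca₀ : c < ‖P.coeff 0‖ := lt_of_lt_of_le hcm hma₀
    set d : ℂ := ((c / ‖P.coeff 0‖ : ℝ) : ℂ) * P.coeff 0 with hd
    have habsd : ‖d‖ = c := by
      rw [hd, norm_mul, Complex.norm_real, Real.norm_eq_abs, abs_of_nonneg (div_nonneg hc0 ha₀pos.le),
        div_mul_cancel₀ _ ha₀pos.ne']
    set Q : Polynomial ℂ := P - Polynomial.C d with hQ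
    have hQdeg : Q.natDegree = n := by rw [hQ, Polynomial.natDegree_sub_C, hdeg]
    have hQcoeff : ∀ j, 1 ≤ j → Q.coeff j = P.coeff j := by
      intro j hj
      rw [hQ, Polynomial.coeff_sub, Polynomial.coeff_C, if_neg (by omega), sub_zero]
    have hQzeros : ∀ z : ℂ, ‖z‖ ≤ k → Q.eval z ≠ 0 := by
      intro z hzk h0
      rw [hQ, Polynomial.eval_sub, Polynomial.eval_C, sub_eq_zero] at h0
      have : ‖P.eval z‖ = c := by rw [h0, habsd]
      have := hmle z hzk
      linarith
    have hq := qazi Q n μ k hμ1 hμn hQdeg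
      (fun j h1 h2 => by rw [hQcoeff j h1]; exact hcoeff j h1 h2) hk hQzeros
    rw [hQcoeff μ hμ1] at hq
    have hQ0 : ‖Q.coeff 0‖ = ‖P.coeff 0‖ - c := by
      rw [hQ, Polynomial.coeff_sub, Polynomial.coeff_C, if_pos rfl, hd]
      have : P.coeff 0 - ((c / ‖P.coeff 0‖ : ℝ) : ℂ) * P.coeff 0
          = ((1 - c / ‖P.coeff 0‖ : ℝ) : ℂ) * P.coeff 0 := by
        push_cast
        ring
      rw [this, norm_mul, Complex.norm_real, Real.norm_eq_abs,
        abs_of_nonneg (by rw [sub_nonneg, div_le_one ha₀pos]; exact hca₀.le)]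
      field_simp
    rw [hQ0] at hq
    exact hq
  -- pass to the limit t → 1⁻
  have htend : Filter.Tendsto (fun t : ℝ => (n : ℝ) * (‖P.coeff 0‖ - t * m))
      (nhdsWithin 1 (Set.Iio 1)) (nhds ((n : ℝ) * (‖P.coeff 0‖ - m))) := by
    have : Continuous (fun t : ℝ => (n : ℝ) * (‖P.coeff 0‖ - t * m)) := by
      continuity
    have h1 := this.tendsto (1 : ℝ)
    simp only [one_mul] at h1
    exact h1.mono_left nhdsWithin_le_nhds
  refine ge_of_tendsto htend ?_
  exact Filter.eventually_of_mem
    (Ico_mem_nhdsLT_of_mem (show (1 : ℝ) ∈ Set.Ioc (0 : ℝ) 1 by norm_num)) hstep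

/-- **Lemma (Gardner–Govil–Weems).** If `P(z) = a₀ + Σ_{j=μ}^n a_j z^j`, `1 ≤ μ ≤ n`,
has degree `n` and no zero in `|z| ≤ k` with `k ≥ 1`, and `m = min_{|z|=k} |P(z)|`,
then `s₀ ≥ k^μ` where
`s₀ = k^{μ+1} ((μ/n)(|a_μ|/(|a₀|-m)) k^{μ-1} + 1) / ((μ/n)(|a_μ|/(|a₀|-m)) k^{μ+1} + 1)`. -/
theorem ggw_bound
    (n μ : ℕ) (P : Polynomial ℂ) (k : ℝ)
    (hμ1 : 1 ≤ μ) (hμn : μ ≤ n)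
    (hdeg : P.natDegree = n)
    (hcoeff : ∀ j, 1 ≤ j → j < μ → P.coeff j = 0)
    (hk : 1 ≤ k)
    (hzeros : ∀ z : ℂ, ‖z‖ ≤ k → P.eval z ≠ 0)
    (m s₀ : ℝ)
    (hm : m = sInf ((fun z => ‖P.eval z‖) '' sphere (0 : ℂ) k))
    (hs₀ : s₀ = k ^ (μ + 1) *
        (((μ : ℝ) / (n : ℝ)) * (‖P.coeff μ‖ / (‖P.coeff 0‖ - m))
            * k ^ (μ - 1) + 1)
      / (((μ : ℝ) / (n : ℝ)) * (‖P.coeff μ‖ / (‖P.coeff 0‖ - m))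
            * k ^ (μ + 1) + 1)) :
    s₀ ≥ k ^ μ := by
  have hk0 : (0 : ℝ) < k := lt_of_lt_of_le one_pos hk
  have hn1 : 1 ≤ n := le_trans hμ1 hμn
  have hnpos : (0 : ℝ) < (n : ℝ) := by exact_mod_cast hn1
  obtain ⟨hmpos, hmle⟩ := min_modulus P k m hk0 hzeros hm
  have hma₀ : m ≤ ‖P.coeff 0‖ := by
    rw [Polynomial.coeff_zero_eq_eval_zero]
    exact hmle 0 (by simpa using hk0.le)
  have key := key_ineq n μ P k hμ1 hμn hdeg hcoeff hk hzeros m hm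
  set A : ℝ := ((μ : ℝ) / (n : ℝ))
    * (‖P.coeff μ‖ / (‖P.coeff 0‖ - m)) with hA
  have hA0 : 0 ≤ A := by
    apply mul_nonneg
    · positivity
    · exact div_nonneg (norm_nonneg _) (by linarith)
  have hAk : A * k ^ μ ≤ 1 := by
    rcases eq_or_lt_of_le (sub_nonneg.mpr hma₀) with heq | hpos
    · rw [hA, ← heq, div_zero, mul_zero, zero_mul]
      norm_num
    · have hAeq : A * k ^ μ
          = ((μ : ℝ) * ‖P.coeff μ‖ * k ^ μ)
            / ((n : ℝ) * (‖P.coeff 0‖ - m)) := by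
        rw [hA]
        field_simp
      rw [hAeq, div_le_one (by positivity)]
      exact key
  have hxpos : (0 : ℝ) < k ^ μ := pow_pos hk0 μ
  have hden : (0 : ℝ) < A * k ^ (μ + 1) + 1 := by positivity
  rw [hs₀, ge_iff_le, le_div_iff₀ hden]
  have h1 : k ^ (μ + 1) = k * k ^ μ := by rw [pow_succ]; ring
  have h2 : k ^ (μ + 1) * k ^ (μ - 1) = k ^ μ * k ^ μ := by
    rw [← pow_add, ← pow_add]
    congr 1
    omega
  nlinarith [mul_nonneg (mul_nonneg (sub_nonneg.mpr hk) hxpos.le) (sub_nonneg.mpr hAk)]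
end

section
/- Let P(z) = a_n z^n + Σ_{j=μ}^{n} a_{n−j} z^{n−j}, 1 ≤ μ ≤ n, be a polynomial of degree n having all its zeros in |z| ≤ k, where k ≤ 1. Then for all z with |z| = 1, |P′(z)| ≥ (n/(1 + k^μ)) |P(z)|. -/
open Polynomial

namespace Complex

noncomputable abbrev abs : AbsoluteValue ℂ ℝ := NormedField.toAbsoluteValue ℂ

theorem sq_abs (z : ℂ) : Complex.abs z ^ 2 = normSq z := Complex.sq_norm z

theorem re_le_abs (z : ℂ) : z.re ≤ Complex.abs z := re_le_norm z

theorem abs_conj (z : ℂ) : Complex.abs ((starRingEnd ℂ) z) = Complex.abs z := norm_conj z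

theorem abs_apply (z : ℂ) : Complex.abs z = Real.sqrt (normSq z) := norm_def z

theorem abs_ofReal (r : ℝ) : Complex.abs (r : ℂ) = |r| := norm_real r

theorem abs_natCast (n : ℕ) : Complex.abs (n : ℂ) = n := norm_natCast n

theorem continuous_abs : Continuous Complex.abs := continuous_norm

theorem norm_eq_abs (z : ℂ) : ‖z‖ = Complex.abs z := rfl

end Complex

namespace DerivLowerBoundAux

open Complex Multiset

noncomputable section

-- L1: evaluated derivative of a root product
lemma L1 (s : Multiset ℂ) (c z : ℂ) :
    eval z (derivative (C c * (s.map fun w => X - C w).prod))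
      = (s.map fun w => c * (((s.erase w).map fun x => z - x).prod)).sum := by
  classical
  rw [derivative_C_mul, eval_mul, eval_C, derivative_prod]
  rw [show eval z (Multiset.map (fun i => (Multiset.map (fun w => X - C w) (s.erase i)).prod * derivative (X - C i)) s).sum = (evalRingHom z) (Multiset.map (fun i => (Multiset.map (fun w => X - C w) (s.erase i)).prod * derivative (X - C i)) s).sum from rfl, map_multiset_sum, Multiset.map_map]
  rw [← Multiset.sum_map_mul_left]
  refine congrArg Multiset.sum (Multiset.map_congr rfl fun w hw => ?_)
  simp only [Function.comp_apply, coe_evalRingHom, eval_mul, derivative_X_sub_C, eval_one,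
    mul_one]
  rw [show eval z (Multiset.map (fun w => X - C w) (s.erase w)).prod = (evalRingHom z) (Multiset.map (fun w => X - C w) (s.erase w)).prod from rfl, map_multiset_prod, Multiset.map_map]
  simp [Function.comp]


lemma scalar_ineq (z w : ℂ) (h : Complex.normSq w ≤ Complex.normSq z) :
    Complex.normSq (z - w) ≤ 2 * ((z - w) * (starRingEnd ℂ) z).re := by
  simp only [Complex.normSq_apply, Complex.mul_re, Complex.sub_re, Complex.sub_im,
    Complex.conj_re, Complex.conj_im] at *
  nlinarith

lemma re_multiset_sum (s : Multiset ℂ) : s.sum.re = (s.map Complex.re).sum := by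
  induction s using Multiset.induction with
  | empty => simp
  | cons a t ih => simp [ih]

lemma L3core (s : Multiset ℂ) (c z : ℂ)
    (hle : ∀ w ∈ s, Complex.abs w ≤ Complex.abs z) :
    (Multiset.card s : ℝ) *
      Complex.normSq (eval z (C c * (s.map fun w => X - C w).prod))
      ≤ 2 * ((eval z (C c * (s.map fun w => X - C w).prod)) *
          (starRingEnd ℂ) (z * eval z (derivative (C c * (s.map fun w => X - C w).prod)))).re := by
  classical
  have hQ : eval z (C c * (s.map fun w => X - C w).prod)
      = c * ((s.map fun x => z - x).prod) := by
    rw [eval_mul, eval_C,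
      show eval z (Multiset.map (fun w => X - C w) s).prod
        = (evalRingHom z) (Multiset.map (fun w => X - C w) s).prod from rfl,
      map_multiset_prod, Multiset.map_map]
    simp [Function.comp]
  set Qe := eval z (C c * (s.map fun w => X - C w).prod) with hQedef
  rw [L1]
  set f : ℂ → ℂ := fun w => c * (((s.erase w).map fun x => z - x).prod) with hf
  have key : (Qe * (starRingEnd ℂ) (z * (s.map f).sum)).re
      = ((s.map fun w => Complex.normSq (f w) * ((z - w) * (starRingEnd ℂ) z).re)).sum := by
    have e1 : Qe * (starRingEnd ℂ) (z * (s.map f).sum)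
        = ((s.map fun w => Qe * (starRingEnd ℂ) z * (starRingEnd ℂ) (f w))).sum := by
      rw [map_mul, map_multiset_sum, Multiset.map_map, ← mul_assoc,
        ← Multiset.sum_map_mul_left]
      rfl
    rw [e1, re_multiset_sum, Multiset.map_map]
    refine congrArg Multiset.sum (Multiset.map_congr rfl fun w hw => ?_)
    have hQw : Qe = (z - w) * f w := by
      rw [hQ, hf, ← Multiset.prod_map_erase (f := fun x => z - x) hw]; ring
    simp only [Function.comp_apply]
    rw [hQw, show (z - w) * f w * (starRingEnd ℂ) z * (starRingEnd ℂ) (f w)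
        = (f w * (starRingEnd ℂ) (f w)) * ((z - w) * (starRingEnd ℂ) z) by ring,
      Complex.mul_conj, Complex.re_ofReal_mul]
  rw [key]
  have e2 : 2 * ((s.map fun w => Complex.normSq (f w) * ((z - w) * (starRingEnd ℂ) z).re)).sum
      = ((s.map fun w => 2 * (Complex.normSq (f w) * ((z - w) * (starRingEnd ℂ) z).re))).sum := by
    rw [← Multiset.sum_map_mul_left]
  have e3 : (Multiset.card s : ℝ) * Complex.normSq Qe
      = ((s.map fun _ => Complex.normSq Qe)).sum := by
    rw [Multiset.map_const', Multiset.sum_replicate, nsmul_eq_mul]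
  rw [e2, e3]
  refine Multiset.sum_map_le_sum_map _ _ fun w hw => ?_
  have hQw : Qe = (z - w) * f w := by
    rw [hQ, hf, ← Multiset.prod_map_erase (f := fun x => z - x) hw]; ring
  rw [hQw, Complex.normSq_mul]
  have hns : Complex.normSq w ≤ Complex.normSq z := by
    have := hle w hw
    rw [← Complex.sq_abs, ← Complex.sq_abs]
    exact pow_le_pow_left₀ (Complex.abs.nonneg w) this 2
  calc Complex.normSq (z - w) * Complex.normSq (f w)
      ≤ (2 * ((z - w) * (starRingEnd ℂ) z).re) * Complex.normSq (f w) :=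
        mul_le_mul_of_nonneg_right (scalar_ineq z w hns) (Complex.normSq_nonneg _)
    _ = 2 * (Complex.normSq (f w) * ((z - w) * (starRingEnd ℂ) z).re) := by ring

-- L2 : the key re identity
lemma L2 (s : Multiset ℂ) (c z : ℂ) :
    ((eval z (C c * (s.map fun w => X - C w).prod)) *
        (starRingEnd ℂ) (z * eval z (derivative (C c * (s.map fun w => X - C w).prod)))).re
      = ((s.map fun w =>
            Complex.normSq (c * (((s.erase w).map fun x => z - x).prod)) *
              ((z - w) * (starRingEnd ℂ) z).re)).sum := by
  classical
  have hQ : eval z (C c * (s.map fun w => X - C w).prod)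
      = c * ((s.map fun x => z - x).prod) := by
    rw [eval_mul, eval_C,
      show eval z (Multiset.map (fun w => X - C w) s).prod
        = (evalRingHom z) (Multiset.map (fun w => X - C w) s).prod from rfl,
      map_multiset_prod, Multiset.map_map]
    simp [Function.comp]
  set Qe := eval z (C c * (s.map fun w => X - C w).prod) with hQedef
  rw [L1]
  set f : ℂ → ℂ := fun w => c * (((s.erase w).map fun x => z - x).prod) with hf
  have e1 : Qe * (starRingEnd ℂ) (z * (s.map f).sum)
      = ((s.map fun w => Qe * (starRingEnd ℂ) z * (starRingEnd ℂ) (f w))).sum := by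
    rw [map_mul, map_multiset_sum, Multiset.map_map, ← mul_assoc,
      ← Multiset.sum_map_mul_left]
    rfl
  rw [e1, re_multiset_sum, Multiset.map_map]
  refine congrArg Multiset.sum (Multiset.map_congr rfl fun w hw => ?_)
  have hQw : Qe = (z - w) * f w := by
    rw [hQ, hf, ← Multiset.prod_map_erase (f := fun x => z - x) hw]; ring
  simp only [Function.comp_apply]
  rw [hQw, show (z - w) * f w * (starRingEnd ℂ) z * (starRingEnd ℂ) (f w)
      = (f w * (starRingEnd ℂ) (f w)) * ((z - w) * (starRingEnd ℂ) z) by ring,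
    Complex.mul_conj, Complex.re_ofReal_mul]

-- L4 : derivative does not vanish outside radius r
lemma L4 (s : Multiset ℂ) (c z : ℂ) (r : ℝ) (hs : s ≠ 0) (hc : c ≠ 0)
    (hlt : ∀ w ∈ s, Complex.abs w < r) (hrz : r ≤ Complex.abs z) :
    eval z (derivative (C c * (s.map fun w => X - C w).prod)) ≠ 0 := by
  classical
  intro h0
  have hpos : 0 < ((eval z (C c * (s.map fun w => X - C w).prod)) *
      (starRingEnd ℂ) (z * eval z (derivative (C c * (s.map fun w => X - C w).prod)))).re := by
    rw [L2]
    have h0' : (0:ℝ) = ((s.map fun _ => (0:ℝ))).sum := by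
      rw [Multiset.map_const', Multiset.sum_replicate, smul_zero]
    rw [h0']
    refine Multiset.sum_lt_sum_of_nonempty ?_ fun w hw => ?_
    · simpa using hs
    · refine mul_pos ?_ ?_
      · rw [Complex.normSq_pos]
        refine mul_ne_zero hc (Multiset.prod_ne_zero ?_)
        intro hmem
        rw [Multiset.mem_map] at hmem
        obtain ⟨x, hx, hzx⟩ := hmem
        have hxs : x ∈ s := Multiset.mem_of_mem_erase hx
        have h1 : Complex.abs x < Complex.abs z := (hlt x hxs).trans_le hrz
        have h2 : z = x := by
          have := sub_eq_zero.mp hzx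
          linear_combination this
        rw [h2] at h1
        exact absurd h1 (lt_irrefl _)
      · have h1 : ((z - w) * (starRingEnd ℂ) z).re
            = Complex.normSq z - (w * (starRingEnd ℂ) z).re := by
          rw [sub_mul, Complex.sub_re, Complex.mul_conj]
          simp
        rw [h1]
        have h2 : (w * (starRingEnd ℂ) z).re ≤ Complex.abs w * Complex.abs z := by
          calc (w * (starRingEnd ℂ) z).re ≤ Complex.abs (w * (starRingEnd ℂ) z) :=
              Complex.re_le_abs _
            _ = Complex.abs w * Complex.abs z := by rw [map_mul, Complex.abs_conj]
        have h3 : Complex.abs w * Complex.abs z < Complex.abs z * Complex.abs z := by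
          have hz0 : 0 < Complex.abs z := lt_of_lt_of_le ((Complex.abs.nonneg w).trans_lt (hlt w hw)) hrz
          exact mul_lt_mul_of_pos_right ((hlt w hw).trans_le hrz) hz0
        have h4 : Complex.abs z * Complex.abs z = normSq z := by
          rw [← Complex.sq_abs]; ring
        linarith
  rw [h0, mul_zero] at hpos
  simp at hpos

lemma eval_reflect (p : Polynomial ℂ) (N : ℕ) (hp : p.natDegree ≤ N) {w : ℂ} (hw : w ≠ 0) :
    eval w (reflect N p) = eval w⁻¹ p * w ^ N := by
  have hinv : Invertible (w⁻¹) := invertibleOfNonzero (inv_ne_zero hw)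
  have h := eval₂_reflect_mul_pow (RingHom.id ℂ) (w⁻¹) N p hp
  have hiv : (⅟(w⁻¹) : ℂ) = w := by
    rw [invOf_eq_inv, inv_inv]
  rw [hiv] at h
  have h2 : eval w (reflect N p) * (w⁻¹) ^ N = eval w⁻¹ p := h
  field_simp at h2
  rw [one_div] at h2; rw [← h2, mul_assoc, ← mul_pow, inv_mul_cancel₀ hw, one_pow, mul_one]

lemma L3abs (s : Multiset ℂ) (c z : ℂ)
    (hle : ∀ w ∈ s, Complex.abs w ≤ Complex.abs z) :
    Complex.abs ((Multiset.card s : ℂ) * eval z (C c * (s.map fun w => X - C w).prod)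
        - z * eval z (derivative (C c * (s.map fun w => X - C w).prod)))
      ≤ Complex.abs (z * eval z (derivative (C c * (s.map fun w => X - C w).prod))) := by
  set Qe := eval z (C c * (s.map fun w => X - C w).prod) with hQe
  set B := z * eval z (derivative (C c * (s.map fun w => X - C w).prod)) with hB
  have core := L3core s c z hle
  have hcast : ((Multiset.card s : ℂ)) = (((Multiset.card s : ℝ)) : ℂ) := by push_cast; ring
  have h1 : Complex.normSq ((Multiset.card s : ℂ) * Qe - B) ≤ Complex.normSq B := by
    rw [Complex.normSq_sub]
    have h2 : ((Multiset.card s : ℂ) * Qe * (starRingEnd ℂ) B).re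
        = (Multiset.card s : ℝ) * (Qe * (starRingEnd ℂ) B).re := by
      rw [hcast, mul_assoc, Complex.re_ofReal_mul]
    have h3 : Complex.normSq ((Multiset.card s : ℂ) * Qe)
        = (Multiset.card s : ℝ)^2 * Complex.normSq Qe := by
      rw [Complex.normSq_mul, hcast, Complex.normSq_ofReal]; ring
    rw [h2, h3]
    nlinarith [mul_le_mul_of_nonneg_left core (Nat.cast_nonneg (Multiset.card s) : (0:ℝ) ≤ (Multiset.card s : ℝ)), Complex.normSq_nonneg Qe]
  rw [Complex.abs_apply, Complex.abs_apply]
  exact Real.sqrt_le_sqrt h1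

lemma A_strict (n μ : ℕ) (Q : Polynomial ℂ) (κ : ℝ)
    (hμ1 : 1 ≤ μ) (hμn : μ ≤ n) (hdeg : Q.natDegree = n)
    (hgap : ∀ j, 1 ≤ j → j < μ → Q.coeff (n - j) = 0)
    (hκ0 : 0 < κ) (hκ1 : κ ≤ 1)
    (hroots : ∀ w : ℂ, Q.eval w = 0 → Complex.abs w < κ)
    (z : ℂ) (hz : Complex.abs z = 1) :
    Complex.abs ((n : ℂ) * Q.eval z - z * (derivative Q).eval z)
      ≤ κ ^ μ * Complex.abs ((derivative Q).eval z) := by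
  classical
  have hn1 : 1 ≤ n := le_trans hμ1 hμn
  have hQ0 : Q ≠ 0 := by
    intro h; rw [h, natDegree_zero] at hdeg; omega
  have hlc : Q.leadingCoeff ≠ 0 := leadingCoeff_ne_zero.mpr hQ0
  have hsplits : (Multiset.card Q.roots) = Q.natDegree :=
    (splits_iff_card_roots).mp (IsAlgClosed.splits Q)
  have hQfact : C Q.leadingCoeff * (Q.roots.map fun a => X - C a).prod = Q :=
    C_leadingCoeff_mul_prod_multiset_X_sub_C hsplits
  set s := Q.roots with hs
  set c := Q.leadingCoeff with hc
  have hscard : Multiset.card s = n := by rw [hs, hsplits, hdeg]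
  have hmem : ∀ w ∈ s, Complex.abs w < κ := by
    intro w hw
    exact hroots w ((mem_roots hQ0).mp hw)
  have hsne : s ≠ 0 := by
    intro h; rw [h] at hscard; simp at hscard; omega
  -- derivative nonvanishing for |y| ≥ κ
  have hder_ne : ∀ y : ℂ, κ ≤ Complex.abs y → (derivative Q).eval y ≠ 0 := by
    intro y hy
    rw [← hQfact]
    exact L4 s c y κ hsne hlc hmem hy
  -- boundary inequality |D y| ≤ |y| |Q' y| whenever all roots within |y|
  have hbd : ∀ y : ℂ, κ ≤ Complex.abs y →
      Complex.abs ((n : ℂ) * Q.eval y - y * (derivative Q).eval y)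
        ≤ Complex.abs y * Complex.abs ((derivative Q).eval y) := by
    intro y hy
    have hle : ∀ w ∈ s, Complex.abs w ≤ Complex.abs y :=
      fun w hw => le_trans (le_of_lt (hmem w hw)) hy
    have := L3abs s c y hle
    rw [hQfact, hscard] at this
    calc Complex.abs ((n : ℂ) * Q.eval y - y * (derivative Q).eval y)
        ≤ Complex.abs (y * (derivative Q).eval y) := this
      _ = Complex.abs y * Complex.abs ((derivative Q).eval y) := map_mul _ _ _
  -- the polynomial D
  set D : Polynomial ℂ := C (n : ℂ) * Q - X * derivative Q with hD
  have hDeval : ∀ y : ℂ, D.eval y = (n : ℂ) * Q.eval y - y * (derivative Q).eval y := by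
    intro y; simp [hD]
  have hDcoeff : ∀ m : ℕ, n - μ < m → D.coeff m = 0 := by
    intro m hm
    have hm1 : 1 ≤ m := by omega
    obtain ⟨m', rfl⟩ : ∃ m', m = m' + 1 := ⟨m - 1, by omega⟩
    have hXc : (X * derivative Q).coeff (m' + 1) = (derivative Q).coeff m' :=
      coeff_X_mul _ _
    have hdc : (derivative Q).coeff m' = Q.coeff (m' + 1) * (m' + 1) := coeff_derivative _ _
    rw [hD, coeff_sub, coeff_C_mul, hXc, hdc]
    rcases lt_trichotomy (m' + 1) n with h | h | h
    · have hcz : Q.coeff (m' + 1) = 0 := by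
        have := hgap (n - (m' + 1)) (by omega) (by omega)
        rwa [show n - (n - (m' + 1)) = m' + 1 from by omega] at this
      rw [hcz]; ring
    · rw [← h]; push_cast; ring
    · rw [coeff_eq_zero_of_natDegree_lt (by omega)]; ring
  have hDdeg : D.natDegree ≤ n - μ := natDegree_le_iff_coeff_eq_zero.mpr hDcoeff
  have hderdeg : (derivative Q).natDegree ≤ n - 1 := by
    have := natDegree_derivative_le Q
    omega
  set num : Polynomial ℂ := reflect (n - μ) D with hnum
  set den : Polynomial ℂ := reflect (n - 1) (derivative Q) with hden
  have hden0 : den.eval 0 ≠ 0 := by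
    rw [← coeff_zero_eq_eval_zero, hden, coeff_reflect]
    rw [show revAt (n-1) 0 = n - 1 from by rw [revAt_le (Nat.zero_le _)]; omega]
    rw [coeff_derivative]
    rw [show n - 1 + 1 = n from by omega]
    refine mul_ne_zero ?_ ?_
    · rw [show Q.coeff n = Q.leadingCoeff by rw [leadingCoeff, hdeg]]; exact hlc
    · exact Nat.cast_add_one_ne_zero (n-1)
  have hden_ne : ∀ w : ℂ, Complex.abs w ≤ 1/κ → den.eval w ≠ 0 := by
    intro w hw
    by_cases hw0 : w = 0
    · rw [hw0]; exact hden0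
    · rw [hden, eval_reflect _ _ hderdeg hw0]
      refine mul_ne_zero ?_ (pow_ne_zero _ hw0)
      refine hder_ne _ ?_
      rw [map_inv₀]
      have habs : 0 < Complex.abs w := Complex.abs.pos hw0
      exact (le_inv_comm₀ hκ0 habs).mpr (by rwa [one_div] at hw)
  -- the rational function and max modulus
  set h : ℂ → ℂ := fun w => num.eval w / den.eval w with hh
  have h1κ : 0 < 1/κ := by positivity
  have hUb : Bornology.IsBounded (Metric.ball (0:ℂ) (1/κ)) := Metric.isBounded_ball
  have hdiff : DiffContOnCl ℂ h (Metric.ball (0:ℂ) (1/κ)) := by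
    constructor
    · refine DifferentiableOn.div ?_ ?_ ?_
      · exact (num.differentiable).differentiableOn
      · exact (den.differentiable).differentiableOn
      · intro w hw
        refine hden_ne w ?_
        have h2 : dist w 0 < 1/κ := Metric.mem_ball.mp hw
        rw [dist_zero_right, Complex.norm_eq_abs] at h2
        exact le_of_lt h2
    · rw [closure_ball (0:ℂ) (ne_of_gt h1κ)]
      refine ContinuousOn.div ?_ ?_ ?_
      · exact (num.continuous_aeval).continuousOn
      · exact (den.continuous_aeval).continuousOn
      · intro w hw
        refine hden_ne w ?_
        have h2 : dist w 0 ≤ 1/κ := Metric.mem_closedBall.mp hw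
        rwa [dist_zero_right, Complex.norm_eq_abs] at h2
  have hfront : ∀ w ∈ frontier (Metric.ball (0:ℂ) (1/κ)), ‖h w‖ ≤ κ ^ μ := by
    intro w hw
    rw [frontier_ball (0:ℂ) (ne_of_gt h1κ)] at hw
    have hwabs : Complex.abs w = 1/κ := by
      have h2 := Metric.mem_sphere.mp hw
      rwa [dist_zero_right, Complex.norm_eq_abs] at h2
    have hw0 : w ≠ 0 := by
      intro h0; rw [h0] at hwabs; simp only [_root_.map_zero] at hwabs; linarith
    set y := w⁻¹ with hy
    have hy0 : y ≠ 0 := inv_ne_zero hw0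
    have hyabs : Complex.abs y = κ := by
      rw [hy, map_inv₀, hwabs]
      field_simp
    have hκy : κ ≤ Complex.abs y := le_of_eq hyabs.symm
    have hnum_eval : num.eval w = D.eval y * w ^ (n - μ) := eval_reflect _ _ hDdeg hw0
    have hden_eval : den.eval w = (derivative Q).eval y * w ^ (n - 1) :=
      eval_reflect _ _ hderdeg hw0
    have hDb : Complex.abs (D.eval y) ≤ κ * Complex.abs ((derivative Q).eval y) := by
      rw [hDeval]
      have h3 := hbd y hκy
      rwa [hyabs] at h3
    have hQ'pos : 0 < Complex.abs ((derivative Q).eval y) := Complex.abs.pos (hder_ne y hκy)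
    rw [hh]
    simp only []
    rw [norm_div, Complex.norm_eq_abs, Complex.norm_eq_abs, hnum_eval, hden_eval,
      map_mul, map_mul, map_pow, map_pow, hwabs]
    rw [div_le_iff₀ (by positivity)]
    have e1 : κ ^ μ * κ ^ (n - μ) = κ ^ n := by rw [← pow_add]; congr 1; omega
    have e2 : κ * κ ^ (n - 1) = κ ^ n := by
      rw [← pow_succ']; congr 1; omega
    have hpowid : κ * (1/κ) ^ (n - μ) = κ ^ μ * (1/κ) ^ (n - 1) := by
      rw [one_div, inv_pow, inv_pow]
      rw [mul_inv_eq_iff_eq_mul₀ (pow_ne_zero _ (ne_of_gt hκ0))]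
      field_simp
      linear_combination e2 - e1
    calc Complex.abs (D.eval y) * (1/κ) ^ (n - μ)
        ≤ (κ * Complex.abs ((derivative Q).eval y)) * (1/κ) ^ (n - μ) :=
          mul_le_mul_of_nonneg_right hDb (by positivity)
      _ = (κ * (1/κ) ^ (n - μ)) * Complex.abs ((derivative Q).eval y) := by ring
      _ = (κ ^ μ * (1/κ) ^ (n - 1)) * Complex.abs ((derivative Q).eval y) := by rw [hpowid]
      _ = κ ^ μ * (Complex.abs ((derivative Q).eval y) * (1/κ) ^ (n - 1)) := by ring
  have hz0 : z ≠ 0 := by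
    intro h0; rw [h0] at hz; simp only [_root_.map_zero] at hz; norm_num at hz
  have hmem : z⁻¹ ∈ closure (Metric.ball (0:ℂ) (1/κ)) := by
    rw [closure_ball (0:ℂ) (ne_of_gt h1κ), Metric.mem_closedBall, dist_zero_right,
      Complex.norm_eq_abs, map_inv₀, hz, inv_one]
    rw [le_div_iff₀ hκ0, one_mul]; exact hκ1
  have hmm := Complex.norm_le_of_forall_mem_frontier_norm_le hUb hdiff hfront hmem
  have hinv0 : z⁻¹ ≠ 0 := inv_ne_zero hz0
  have habsinv : Complex.abs z⁻¹ = 1 := by rw [map_inv₀, hz, inv_one]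
  have hdnz : den.eval z⁻¹ ≠ 0 := hden_ne _ (by rw [habsinv, le_div_iff₀ hκ0, one_mul]; exact hκ1)
  rw [hh] at hmm
  simp only [] at hmm
  rw [norm_div, Complex.norm_eq_abs, Complex.norm_eq_abs,
    div_le_iff₀ (Complex.abs.pos hdnz)] at hmm
  have hnum_eval : num.eval z⁻¹ = D.eval z * (z⁻¹) ^ (n - μ) := by
    have := eval_reflect _ _ hDdeg hinv0 (w := z⁻¹)
    rwa [inv_inv] at this
  have hden_eval : den.eval z⁻¹ = (derivative Q).eval z * (z⁻¹) ^ (n - 1) := by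
    have := eval_reflect _ _ hderdeg hinv0 (w := z⁻¹)
    rwa [inv_inv] at this
  rw [hnum_eval, hden_eval, map_mul, map_mul, map_pow, map_pow, habsinv, one_pow, one_pow,
    mul_one, mul_one] at hmm
  rw [← hDeval]
  exact hmm

lemma LA (n μ : ℕ) (P : Polynomial ℂ) (k : ℝ)
    (hμ1 : 1 ≤ μ) (hμn : μ ≤ n) (hdeg : P.natDegree = n)
    (hcoeff : ∀ j, 1 ≤ j → j < μ → P.coeff (n - j) = 0)
    (hk1 : k ≤ 1) (hk0 : 0 ≤ k)
    (hzeros : ∀ w : ℂ, P.eval w = 0 → Complex.abs w ≤ k)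
    (z : ℂ) (hz : Complex.abs z = 1) :
    Complex.abs ((n : ℂ) * P.eval z - z * (derivative P).eval z)
      ≤ k ^ μ * Complex.abs ((derivative P).eval z) := by
  classical
  have hn1 : 1 ≤ n := le_trans hμ1 hμn
  have hP0 : P ≠ 0 := by
    intro h; rw [h, natDegree_zero] at hdeg; omega
  rcases eq_or_lt_of_le hk0 with hk | hk
  · -- k = 0 : P = c X^n
    have hlc : P.leadingCoeff ≠ 0 := leadingCoeff_ne_zero.mpr hP0
    have hsplits : (Multiset.card P.roots) = P.natDegree :=
      (splits_iff_card_roots).mp (IsAlgClosed.splits P)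
    have hPfact : C P.leadingCoeff * (P.roots.map fun a => X - C a).prod = P :=
      C_leadingCoeff_mul_prod_multiset_X_sub_C hsplits
    have hzero : ∀ a ∈ P.roots, (fun a => X - C a) a = X := by
      intro a ha
      have h0 : Complex.abs a ≤ k := hzeros a ((mem_roots hP0).mp ha)
      rw [← hk] at h0
      have : a = 0 := by
        have := Complex.abs.nonneg a
        have : Complex.abs a = 0 := le_antisymm h0 this
        exact Complex.abs.eq_zero.mp this
      simp [this]
    have hPX : P = C P.leadingCoeff * X ^ n := by
      conv_lhs => rw [← hPfact]
      rw [Multiset.map_congr rfl hzero, Multiset.map_const', Multiset.prod_replicate,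
        hsplits, hdeg]
    have hexpr : (n : ℂ) * P.eval z - z * (derivative P).eval z = 0 := by
      rw [hPX]
      rw [derivative_C_mul, derivative_X_pow]
      simp only [eval_mul, eval_C, eval_pow, eval_X, eval_natCast]
      rw [show z * (P.leadingCoeff * ((n:ℂ) * z ^ (n-1))) = (n:ℂ) * (P.leadingCoeff * (z * z^(n-1))) by ring,
        ← pow_succ', show n - 1 + 1 = n from by omega]
      ring
    rw [hexpr]
    simp only [_root_.map_zero]
    positivity
  · -- 0 < k : limit
    set f1 : ℝ → ℂ := fun t => ∑ i ∈ Finset.range (n+1), P.coeff i * (t:ℂ)^(n-i) * z^i with hf1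
    set f2 : ℝ → ℂ := fun t =>
      ∑ m ∈ Finset.range (n+1), P.coeff (m+1) * (t:ℂ)^(n-(m+1)) * ((m:ℂ)+1) * z^m with hf2
    have hdegt : ∀ t : ℝ, (scaleRoots P (t:ℂ)).natDegree = n := by
      intro t; rw [natDegree_scaleRoots, hdeg]
    have hc1 : ∀ t : ℝ, (scaleRoots P (t:ℂ)).eval z = f1 t := by
      intro t
      rw [eval_eq_sum_range, hdegt t]
      refine Finset.sum_congr rfl fun i _ => ?_
      rw [coeff_scaleRoots, hdeg]
    have hc2 : ∀ t : ℝ, (derivative (scaleRoots P (t:ℂ))).eval z = f2 t := by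
      intro t
      rw [eval_eq_sum_range' (n := n+1) (by
        have := natDegree_derivative_le (scaleRoots P (t:ℂ))
        rw [hdegt t] at this; omega)]
      refine Finset.sum_congr rfl fun m _ => ?_
      rw [coeff_derivative, coeff_scaleRoots, hdeg]
    have hcont1 : Continuous f1 := by
      refine continuous_finset_sum _ fun i _ => ?_
      exact (continuous_const.mul ((Complex.continuous_ofReal).pow _)).mul continuous_const
    have hcont2 : Continuous f2 := by
      refine continuous_finset_sum _ fun i _ => ?_
      exact ((continuous_const.mul ((Complex.continuous_ofReal).pow _)).mul
        continuous_const).mul continuous_const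
    have hone : scaleRoots P ((1:ℝ):ℂ) = P := by
      ext i; rw [coeff_scaleRoots]; norm_num
    have hf1one : f1 1 = P.eval z := by rw [← hc1 1, hone]
    have hf2one : f2 1 = (derivative P).eval z := by rw [← hc2 1, hone]
    have hev : ∀ᶠ t in nhdsWithin (1:ℝ) (Set.Iio 1),
        Complex.abs ((n : ℂ) * f1 t - z * f2 t) ≤ k ^ μ * Complex.abs (f2 t) := by
      filter_upwards [Ioo_mem_nhdsLT_of_mem (Set.mem_Ioc.mpr ⟨one_pos, le_refl 1⟩)] with t ht
      obtain ⟨ht0, ht1⟩ := ht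
      rw [← hc1 t, ← hc2 t]
      refine A_strict n μ (scaleRoots P (t:ℂ)) k hμ1 hμn (hdegt t) ?_ hk hk1 ?_ z hz
      · intro j hj1 hjμ
        rw [coeff_scaleRoots, hdeg, hcoeff j hj1 hjμ, zero_mul]
      · intro w hw
        have htne : (t:ℂ) ≠ 0 := by
          simpa using ne_of_gt ht0
        have key := scaleRoots_eval₂_mul (RingHom.id ℂ) ((t:ℂ)⁻¹ * w) (t:ℂ) (p := P)
        simp only [RingHom.id_apply] at key
        rw [show (t:ℂ) * ((t:ℂ)⁻¹ * w) = w from by field_simp] at key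
        have hweval : eval₂ (RingHom.id ℂ) w (scaleRoots P (t:ℂ)) = eval w (scaleRoots P (t:ℂ)) := rfl
        have hweval2 : eval₂ (RingHom.id ℂ) ((t:ℂ)⁻¹ * w) P = eval ((t:ℂ)⁻¹ * w) P := rfl
        rw [hweval, hweval2, hw] at key
        have hroot : P.eval ((t:ℂ)⁻¹ * w) = 0 := by
          have h2 := key.symm
          have h3 : ((t:ℂ)) ^ P.natDegree ≠ 0 := pow_ne_zero _ htne
          exact (mul_eq_zero.mp h2).resolve_left h3
        have h4 : Complex.abs ((t:ℂ)⁻¹ * w) ≤ k := hzeros _ hroot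
        rw [map_mul, map_inv₀] at h4
        have habs_t : Complex.abs ((t:ℂ)) = t := by
          rw [Complex.abs_ofReal, abs_of_pos ht0]
        rw [habs_t] at h4
        have h5 : Complex.abs w ≤ t * k := by
          rw [inv_mul_le_iff₀ ht0] at h4
          linarith [h4]
        calc Complex.abs w ≤ t * k := h5
          _ < 1 * k := by
            exact mul_lt_mul_of_pos_right ht1 hk
          _ = k := one_mul k
    have htend : Filter.Tendsto
        (fun t => k ^ μ * Complex.abs (f2 t) - Complex.abs ((n : ℂ) * f1 t - z * f2 t))
        (nhdsWithin (1:ℝ) (Set.Iio 1))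
        (nhds (k ^ μ * Complex.abs (f2 1) - Complex.abs ((n : ℂ) * f1 1 - z * f2 1))) := by
      refine Filter.Tendsto.mono_left ?_ nhdsWithin_le_nhds
      refine Continuous.tendsto ?_ 1
      refine Continuous.sub (continuous_const.mul (Complex.continuous_abs.comp hcont2)) ?_
      exact Complex.continuous_abs.comp ((continuous_const.mul hcont1).sub
        (continuous_const.mul hcont2))
    have hlim : 0 ≤ k ^ μ * Complex.abs (f2 1) - Complex.abs ((n : ℂ) * f1 1 - z * f2 1) := by
      refine ge_of_tendsto htend ?_
      filter_upwards [hev] with t ht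
      linarith
    rw [hf1one, hf2one] at hlim
    linarith

end

end DerivLowerBoundAux

open DerivLowerBoundAux in
/-- If `P(z) = aₙzⁿ + Σ_{j=μ}^n a_{n-j} z^{n-j}`, `1 ≤ μ ≤ n`, has all its zeros in
`|z| ≤ k ≤ 1`, then for all `z` with `|z| = 1`, `|P'(z)| ≥ (n/(1 + k^μ)) |P(z)|`. -/
theorem derivative_lower_bound
    (n μ : ℕ) (P : Polynomial ℂ) (k : ℝ)
    (hμ1 : 1 ≤ μ) (hμn : μ ≤ n)
    (hdeg : P.natDegree = n)
    (hcoeff : ∀ j, 1 ≤ j → j < μ → P.coeff (n - j) = 0)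
    (hk : k ≤ 1)
    (hzeros : ∀ z : ℂ, P.eval z = 0 → ‖z‖ ≤ k) :
    ∀ z : ℂ, ‖z‖ = 1 →
      ‖(Polynomial.derivative P).eval z‖
        ≥ (n : ℝ) / (1 + k ^ μ) * ‖P.eval z‖ := by
  intro z hz
  change Complex.abs z = 1 at hz
  change Complex.abs ((Polynomial.derivative P).eval z)
        ≥ (n : ℝ) / (1 + k ^ μ) * Complex.abs (P.eval z)
  have hn1 : 1 ≤ n := le_trans hμ1 hμn
  have hP0 : P ≠ 0 := by
    intro h; rw [h, natDegree_zero] at hdeg; omega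
  -- k is nonnegative
  have hk0 : 0 ≤ k := by
    have hdegpos : 0 < P.degree := by
      rw [degree_eq_natDegree hP0, hdeg]
      exact_mod_cast hn1
    obtain ⟨x, hx⟩ := Complex.exists_root hdegpos
    exact le_trans (Complex.abs.nonneg x) (hzeros x hx)
  have hLA := LA n μ P k hμ1 hμn hdeg hcoeff hk hk0 hzeros z hz
  have h1 : (n : ℝ) * Complex.abs (P.eval z)
      ≤ (1 + k ^ μ) * Complex.abs ((derivative P).eval z) := by
    have e2 := Complex.abs.add_le ((n : ℂ) * P.eval z - z * (derivative P).eval z)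
      (z * (derivative P).eval z)
    rw [sub_add_cancel] at e2
    rw [map_mul, Complex.abs_natCast] at e2
    rw [map_mul, hz, one_mul] at e2
    linarith [hLA]
  have hpos : 0 < 1 + k ^ μ := by positivity
  rw [ge_iff_le, div_mul_eq_mul_div, div_le_iff₀ hpos]
  calc (n:ℝ) * Complex.abs (P.eval z) ≤ (1 + k ^ μ) * Complex.abs ((derivative P).eval z) := h1
    _ = Complex.abs ((derivative P).eval z) * (1 + k ^ μ) := by ring
end

section
/- Let P(z) be a polynomial of degree n having all its zeros in |z| < k, where k ≤ 1, and set m = min_{|z|=k} |P(z)|. Then for every z with |z| ≥ k, |P′(z)| ≥ m n |z|^{n−1} / k^n. -/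
open Polynomial Metric

private lemma aux_re_pos {k : ℝ} {z r : ℂ} (hk : 0 < k) (hz : k ≤ ‖z‖)
    (hr : ‖r‖ < k) : 0 < (z / (z - r)).re := by
  have hzr : z - r ≠ 0 := sub_ne_zero.2 fun h => absurd (h ▸ hz) (not_le.2 hr)
  have h1 : z / (z - r)
      = (((Complex.normSq (z - r))⁻¹ : ℝ) : ℂ) * (z * (starRingEnd ℂ) (z - r)) := by
    rw [div_eq_mul_inv, Complex.inv_def, Complex.ofReal_inv]; ring
  rw [h1, Complex.re_ofReal_mul]
  have h2 : 0 < (z * (starRingEnd ℂ) (z - r)).re := by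
    have h3 : z * (starRingEnd ℂ) (z - r)
        = (Complex.normSq z : ℂ) - z * (starRingEnd ℂ) r := by
      rw [map_sub, mul_sub, Complex.mul_conj]
    rw [h3, Complex.sub_re, Complex.ofReal_re]
    have h4 : (z * (starRingEnd ℂ) r).re ≤ ‖z‖ * ‖r‖ := by
      calc (z * (starRingEnd ℂ) r).re ≤ ‖z * (starRingEnd ℂ) r‖ :=
            Complex.re_le_norm _
        _ = ‖z‖ * ‖r‖ := by rw [norm_mul, Complex.norm_conj]
    have h5 : Complex.normSq z = ‖z‖ ^ 2 := Complex.normSq_eq_norm_sq z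
    nlinarith [norm_nonneg z, norm_nonneg r]
  exact mul_pos (inv_pos.2 (Complex.normSq_pos.2 hzr)) h2

private lemma aux_GL {k : ℝ} {z : ℂ} (hk : 0 < k) (hz : k ≤ ‖z‖) :
    ∀ s : Multiset ℂ, (∀ r ∈ s, ‖r‖ < k) →
      (Multiset.map (fun r => X - C r) s).prod.eval z ≠ 0 ∧
      (s ≠ 0 → 0 < (z * ((Multiset.map (fun r => X - C r) s).prod.derivative.eval z) /
        (Multiset.map (fun r => X - C r) s).prod.eval z).re) := by
  intro s
  induction s using Multiset.induction_on with
  | empty => intro _; exact ⟨by simp, fun h => absurd rfl h⟩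
  | cons r t ih =>
    intro hmem
    have hr : ‖r‖ < k := hmem r (Multiset.mem_cons_self r t)
    have ht := ih fun x hx => hmem x (Multiset.mem_cons_of_mem hx)
    set Qt := (Multiset.map (fun r => X - C r) t).prod with hQtdef
    have hzr : z - r ≠ 0 := sub_ne_zero.2 fun h => absurd (h ▸ hz) (not_le.2 hr)
    have hprod : (Multiset.map (fun r => X - C r) (r ::ₘ t)).prod = (X - C r) * Qt := by
      rw [Multiset.map_cons, Multiset.prod_cons]
    have hder : ((X - C r) * Qt).derivative = Qt + (X - C r) * Qt.derivative := by
      rw [derivative_mul, derivative_sub, derivative_X, derivative_C]; ring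
    have hne : ((Multiset.map (fun r => X - C r) (r ::ₘ t)).prod).eval z ≠ 0 := by
      rw [hprod, eval_mul]
      exact mul_ne_zero (by simpa [eval_sub] using hzr) ht.1
    refine ⟨hne, fun _ => ?_⟩
    rw [hprod, hder]
    have hkey : z * ((Qt + (X - C r) * Qt.derivative).eval z) / (((X - C r) * Qt).eval z)
        = z / (z - r) + z * Qt.derivative.eval z / Qt.eval z := by
      simp only [eval_add, eval_mul, eval_sub, eval_X, eval_C]
      field_simp [hzr, ht.1]
    rw [hkey, Complex.add_re]
    have hpos1 := aux_re_pos hk hz hr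
    rcases eq_or_ne t 0 with h0 | h0
    · subst h0
      simp only [hQtdef, Multiset.map_zero, Multiset.prod_zero, derivative_one, eval_zero,
        mul_zero, zero_mul, zero_div, Complex.zero_re, add_zero]
      exact hpos1
    · exact add_pos hpos1 (ht.2 h0)

private lemma aux_growth {P : Polynomial ℂ} {n : ℕ} {k m : ℝ} (hk : 0 < k) (hm : 0 < m)
    (hdeg : P.natDegree = n) (hP0 : P ≠ 0)
    (hzeros : ∀ w : ℂ, P.eval w = 0 → ‖w‖ < k)
    (key : ∀ ζ : ℂ, ‖ζ‖ = k → m ≤ ‖P.eval ζ‖) :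
    ∀ w : ℂ, k ≤ ‖w‖ → m * ‖w‖ ^ n / k ^ n ≤ ‖P.eval w‖ := by
  set Q := P.reverse with hQdef
  have hQrev : ∀ v : ℂ, v ≠ 0 → Q.eval v = v ^ n * P.eval v⁻¹ := by
    intro v hv
    letI : Invertible (v⁻¹) := invertibleOfNonzero (inv_ne_zero hv)
    have h := eval₂_reverse_mul_pow (RingHom.id ℂ) v⁻¹ P
    rw [invOf_eq_inv, inv_inv] at h
    have h' : Q.eval v * v⁻¹ ^ n = P.eval v⁻¹ := by rw [← hdeg]; exact h
    have hvn : (v:ℂ) ^ n ≠ 0 := pow_ne_zero _ hv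
    calc Q.eval v = Q.eval v * v⁻¹ ^ n * v ^ n := by
          rw [mul_assoc, inv_pow, inv_mul_cancel₀ (pow_ne_zero _ hv), mul_one]
      _ = v ^ n * P.eval v⁻¹ := by rw [h']; ring
  have hQne : ∀ v : ℂ, ‖v‖ ≤ k⁻¹ → Q.eval v ≠ 0 := by
    intro v hv
    rcases eq_or_ne v 0 with rfl | hv0
    · have h0 : Q.eval 0 = P.leadingCoeff := by
        rw [← coeff_zero_eq_eval_zero, hQdef, coeff_zero_reverse]
      rw [h0]
      exact leadingCoeff_ne_zero.2 hP0
    · rw [hQrev v hv0]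
      refine mul_ne_zero (pow_ne_zero _ hv0) fun h0 => ?_
      have h1 := hzeros _ h0
      have h2 : k ≤ ‖v⁻¹‖ := by
        rw [norm_inv]
        calc k = (k⁻¹)⁻¹ := (inv_inv k).symm
          _ ≤ (‖v‖)⁻¹ := inv_anti₀ (norm_pos_iff.2 hv0) hv
      exact absurd h1 (not_lt.2 h2)
  intro w hw
  have hwpos : 0 < ‖w‖ := lt_of_lt_of_le hk hw
  have hw0 : w ≠ 0 := fun h => by simp [h] at hwpos
  have hclos : closure (ball (0 : ℂ) k⁻¹) = closedBall 0 k⁻¹ :=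
    closure_ball 0 (ne_of_gt (inv_pos.2 hk))
  have hdiff : DiffContOnCl ℂ (fun v => (Q.eval v)⁻¹) (ball (0 : ℂ) k⁻¹) := by
    refine DifferentiableOn.diffContOnCl ?_
    rw [hclos]
    refine DifferentiableOn.inv (Polynomial.differentiable Q).differentiableOn ?_
    intro v hv
    exact hQne v (by simpa using mem_closedBall_zero_iff.1 hv)
  have hfr : ∀ v ∈ frontier (ball (0 : ℂ) k⁻¹), ‖(Q.eval v)⁻¹‖ ≤ k ^ n / m := by
    intro v hv
    rw [frontier_ball (0:ℂ) (show (k⁻¹:ℝ) ≠ 0 from ne_of_gt (inv_pos.2 hk))] at hv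
    have hvk : ‖v‖ = k⁻¹ := by
      simpa using mem_sphere_zero_iff_norm.1 hv
    have hv0 : v ≠ 0 := by
      intro h; rw [h, norm_zero] at hvk
      exact absurd hvk.symm (ne_of_gt (inv_pos.2 hk))
    have hinv : ‖v⁻¹‖ = k := by rw [norm_inv, hvk, inv_inv]
    have hQv : ‖Q.eval v‖ = (k ^ n)⁻¹ * ‖P.eval v⁻¹‖ := by
      rw [hQrev v hv0, norm_mul, norm_pow, hvk, inv_pow]
    have hQv' : m / k ^ n ≤ ‖Q.eval v‖ := by
      rw [hQv, div_eq_inv_mul]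
      exact mul_le_mul_of_nonneg_left (key _ hinv) (inv_nonneg.2 (le_of_lt (pow_pos hk n)))
    rw [norm_inv]
    calc (‖Q.eval v‖)⁻¹ ≤ (m / k ^ n)⁻¹ :=
          inv_anti₀ (div_pos hm (pow_pos hk n)) hQv'
      _ = k ^ n / m := by rw [inv_div]
  have hmem : w⁻¹ ∈ closure (ball (0 : ℂ) k⁻¹) := by
    rw [hclos, mem_closedBall_zero_iff, norm_inv]
    exact inv_anti₀ hk hw
  have hmax : ‖(Q.eval w⁻¹)⁻¹‖ ≤ k ^ n / m :=
    Complex.norm_le_of_forall_mem_frontier_norm_le isBounded_ball hdiff hfr hmem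
  have hQw0 : Q.eval w⁻¹ ≠ 0 := by
    refine hQne _ ?_
    rw [norm_inv]
    exact inv_anti₀ hk hw
  have hApos : 0 < ‖Q.eval w⁻¹‖ := norm_pos_iff.2 hQw0
  rw [norm_inv] at hmax
  have hfin : m / k ^ n ≤ ‖Q.eval w⁻¹‖ := by
    have h := inv_anti₀ (inv_pos.2 hApos) hmax
    rwa [inv_inv, inv_div] at h
  have hQw : ‖Q.eval w⁻¹‖ = (‖w‖)⁻¹ ^ n * ‖P.eval w‖ := by
    rw [hQrev w⁻¹ (inv_ne_zero hw0), inv_inv, norm_mul, norm_pow, norm_inv]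
  rw [hQw] at hfin
  have hwn : (0:ℝ) < ‖w‖ ^ n := pow_pos hwpos n
  calc m * ‖w‖ ^ n / k ^ n = m / k ^ n * ‖w‖ ^ n := by ring
    _ ≤ (‖w‖)⁻¹ ^ n * ‖P.eval w‖ * ‖w‖ ^ n :=
        mul_le_mul_of_nonneg_right hfin (le_of_lt hwn)
    _ = ‖P.eval w‖ := by
        rw [inv_pow, mul_comm _ (‖P.eval w‖), mul_assoc, inv_mul_cancel₀ hwn.ne', mul_one]

/-- If `P` is a polynomial of degree `n` with all zeros in `|z| < k ≤ 1` and
`m = min_{|z|=k} |P(z)|`, then for every `z` with `|z| ≥ k`,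
`|P'(z)| ≥ m n |z|^{n-1} / kⁿ`. -/
theorem derivative_outside_bound
    (n : ℕ) (P : Polynomial ℂ) (k : ℝ)
    (hdeg : P.natDegree = n)
    (hk : k ≤ 1)
    (hzeros : ∀ z : ℂ, P.eval z = 0 → ‖z‖ < k)
    (m : ℝ)
    (hm : m = sInf ((fun z => ‖P.eval z‖) '' sphere (0 : ℂ) k)) :
    ∀ z : ℂ, k ≤ ‖z‖ →
      ‖(Polynomial.derivative P).eval z‖
        ≥ m * (n : ℝ) * ‖z‖ ^ (n - 1) / k ^ n := by
  intro z hz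
  rcases Nat.eq_zero_or_pos n with hn | hn
  · subst hn
    simpa using norm_nonneg ((Polynomial.derivative P).eval z)
  have hn0 : n ≠ 0 := Nat.pos_iff_ne_zero.1 hn
  rcases lt_trichotomy k 0 with hk0 | hk0 | hk0
  · -- k < 0 : sphere empty, m = 0
    have hS : (fun z => ‖P.eval z‖) '' sphere (0 : ℂ) k = ∅ := by
      rw [sphere_eq_empty_of_neg hk0, Set.image_empty]
    rw [hm, hS, Real.sInf_empty]
    simpa using norm_nonneg ((Polynomial.derivative P).eval z)
  · subst hk0
    rw [zero_pow hn0, div_zero]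
    exact norm_nonneg _
  -- now k > 0
  rcases le_or_gt m 0 with hm0 | hm0
  · -- m ≤ 0 : RHS ≤ 0
    have h1 : m * (n : ℝ) * ‖z‖ ^ (n - 1) ≤ 0 :=
      mul_nonpos_of_nonpos_of_nonneg
        (mul_nonpos_of_nonpos_of_nonneg hm0 (Nat.cast_nonneg n))
        (pow_nonneg (norm_nonneg z) (n - 1))
    have h2 : m * (n : ℝ) * ‖z‖ ^ (n - 1) / k ^ n ≤ 0 :=
      div_nonpos_of_nonpos_of_nonneg h1 (le_of_lt (pow_pos hk0 n))
    exact le_trans h2 (norm_nonneg _)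
  -- m > 0
  have hP0 : P ≠ 0 := by
    intro h
    have hkz : ‖(k : ℂ)‖ = k := by
      rw [Complex.norm_real, Real.norm_eq_abs, abs_of_pos hk0]
    have := hzeros (k : ℂ) (by rw [h, eval_zero])
    rw [hkz] at this
    exact absurd this (lt_irrefl _)
  have keymem : ∀ ζ : ℂ, ‖ζ‖ = k → m ≤ ‖P.eval ζ‖ := by
    intro ζ hζ
    have hbdd : BddBelow ((fun z => ‖P.eval z‖) '' sphere (0 : ℂ) k) := by
      refine ⟨0, fun x hx => ?_⟩
      obtain ⟨w, _, rfl⟩ := hx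
      exact norm_nonneg _
    have hmem : ‖P.eval ζ‖ ∈ (fun z => ‖P.eval z‖) '' sphere (0 : ℂ) k :=
      ⟨ζ, mem_sphere_zero_iff_norm.2 (by rw [hζ]), rfl⟩
    rw [hm]
    exact csInf_le hbdd hmem
  have growth := aux_growth hk0 hm0 hdeg hP0 hzeros keymem
  rw [ge_iff_le]
  by_contra hcon
  push_neg at hcon
  have hzpos : 0 < ‖z‖ := lt_of_lt_of_le hk0 hz
  have hz0 : z ≠ 0 := fun h => by simp [h] at hzpos
  have hnzC : ((n : ℂ) * z ^ (n - 1)) ≠ 0 :=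
    mul_ne_zero (Nat.cast_ne_zero.2 hn0) (pow_ne_zero _ hz0)
  set b : ℂ := (Polynomial.derivative P).eval z / ((n : ℂ) * z ^ (n - 1)) with hbdef
  have habsnz : ‖(n : ℂ) * z ^ (n - 1)‖ = (n : ℝ) * ‖z‖ ^ (n - 1) := by
    rw [norm_mul, norm_pow, Complex.norm_natCast]
  have hD : (0:ℝ) < (n : ℝ) * ‖z‖ ^ (n - 1) :=
    mul_pos (by exact_mod_cast hn) (pow_pos hzpos _)
  have hb : ‖b‖ < m / k ^ n := by
    rw [hbdef, norm_div, habsnz, div_lt_iff₀ hD]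
    calc ‖(Polynomial.derivative P).eval z‖
        < m * (n : ℝ) * ‖z‖ ^ (n - 1) / k ^ n := hcon
      _ = m / k ^ n * ((n : ℝ) * ‖z‖ ^ (n - 1)) := by ring
  set F : Polynomial ℂ := P - C b * X ^ n with hFdef
  have hFeval : ∀ w : ℂ, F.eval w = P.eval w - b * w ^ n := by
    intro w
    rw [hFdef]
    simp only [eval_sub, eval_mul, eval_pow, eval_C, eval_X]
  have hFder : (Polynomial.derivative F).eval z
      = (Polynomial.derivative P).eval z - b * ((n : ℂ) * z ^ (n - 1)) := by
    rw [hFdef, derivative_sub, derivative_C_mul, derivative_X_pow]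
    simp only [eval_sub, eval_mul, eval_C, eval_pow, eval_X]
  have hFderz : (Polynomial.derivative F).eval z = 0 := by
    rw [hFder, hbdef, div_mul_cancel₀ _ hnzC, sub_self]
  have hFne : ∀ w : ℂ, k ≤ ‖w‖ → F.eval w ≠ 0 := by
    intro w hw h0
    rw [hFeval, sub_eq_zero] at h0
    have h1 : m * ‖w‖ ^ n / k ^ n ≤ ‖P.eval w‖ := growth w hw
    have h2 : ‖P.eval w‖ = ‖b‖ * ‖w‖ ^ n := by
      rw [h0, norm_mul, norm_pow]
    have hwn : (0:ℝ) < ‖w‖ ^ n := pow_pos (lt_of_lt_of_le hk0 hw) n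
    rw [h2] at h1
    have h3 : ‖b‖ * ‖w‖ ^ n < m / k ^ n * ‖w‖ ^ n :=
      mul_lt_mul_of_pos_right hb hwn
    have h4 : m * ‖w‖ ^ n / k ^ n = m / k ^ n * ‖w‖ ^ n := by ring
    rw [h4] at h1
    exact absurd (lt_of_le_of_lt h1 h3) (lt_irrefl _)
  have hF0 : F ≠ 0 := fun h => hFne z hz (by rw [h, eval_zero])
  rcases eq_or_ne F.natDegree 0 with hdF | hdF
  · -- F constant
    obtain ⟨c, hc⟩ := natDegree_eq_zero.1 hdF
    have hPeq : ∀ w : ℂ, P.eval w = c + b * w ^ n := by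
      intro w
      have := hFeval w
      rw [← hc, eval_C] at this
      linear_combination -this
    set d : ℝ := m / k ^ n - ‖b‖ with hddef
    have hd : 0 < d := sub_pos.2 hb
    set t : ℝ := max k (‖c‖ / d + 1) with htdef
    have htk : k ≤ t := le_max_left _ _
    have h01 : (0:ℝ) ≤ ‖c‖ / d := by positivity
    have ht1 : 1 ≤ t := le_trans (by linarith) (le_max_right _ _)
    have htc : ‖c‖ / d + 1 ≤ t := le_max_right _ _
    have htpos : 0 < t := lt_of_lt_of_le zero_lt_one ht1
    have htabs : ‖(t : ℂ)‖ = t := by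
      rw [Complex.norm_real, Real.norm_eq_abs, abs_of_pos htpos]
    have hgt := growth (t : ℂ) (by rw [htabs]; exact htk)
    rw [hPeq, htabs] at hgt
    have hup : ‖c + b * (t : ℂ) ^ n‖ ≤ ‖c‖ + ‖b‖ * t ^ n := by
      calc ‖c + b * (t : ℂ) ^ n‖
          ≤ ‖c‖ + ‖b * (t : ℂ) ^ n‖ := norm_add_le _ _
        _ = ‖c‖ + ‖b‖ * t ^ n := by
            rw [norm_mul, norm_pow, htabs]
    have htn : t ≤ t ^ n := le_self_pow₀ ht1 hn0
    have hdc : d * t ^ n ≤ ‖c‖ := by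
      have e : d * t ^ n = m * t ^ n / k ^ n - ‖b‖ * t ^ n := by
        rw [hddef]; ring
      rw [e]
      linarith [le_trans hgt hup]
    have hdt : ‖c‖ < d * t ^ n := by
      calc ‖c‖ < d * (‖c‖ / d + 1) := by
            rw [mul_add, mul_one, mul_div_cancel₀ _ (ne_of_gt hd)]
            linarith
        _ ≤ d * t := mul_le_mul_of_nonneg_left htc (le_of_lt hd)
        _ ≤ d * t ^ n := mul_le_mul_of_nonneg_left htn (le_of_lt hd)
    exact absurd hdc (not_le.2 hdt)
  · -- F nonconstant
    have hsplits : Splits F := IsAlgClosed.splits F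
    have hcard : F.roots.card = F.natDegree := splits_iff_card_roots.1 hsplits
    have hroots0 : F.roots ≠ 0 := by
      intro h
      rw [h] at hcard
      exact hdF (by simpa using hcard.symm)
    have hrootlt : ∀ r ∈ F.roots, ‖r‖ < k := by
      intro r hr
      by_contra hcon2
      push_neg at hcon2
      exact hFne r hcon2 ((mem_roots hF0).1 hr)
    have hfac : F = C F.leadingCoeff * (F.roots.map fun a => X - C a).prod :=
      hsplits.eq_prod_roots
    obtain ⟨hQne, hQpos⟩ := aux_GL hk0 hz F.roots hrootlt
    have hlc : F.leadingCoeff ≠ 0 := leadingCoeff_ne_zero.2 hF0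
    have hderfac : (Polynomial.derivative F).eval z
        = F.leadingCoeff * ((F.roots.map fun a => X - C a).prod.derivative.eval z) := by
      conv_lhs => rw [hfac]
      rw [derivative_C_mul, eval_mul, eval_C]
    have hQ'z : (F.roots.map fun a => X - C a).prod.derivative.eval z = 0 := by
      have := hFderz
      rw [hderfac] at this
      exact (mul_eq_zero.1 this).resolve_left hlc
    have := hQpos hroots0
    rw [hQ'z] at this
    simp at this
end
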